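/- Let N ≥ 1, let σ_w, σ_n, σ_wn > 0, let c ∈ ℝ^N, let Q be a symmetric positive-semidefinite real N×N matrix, and let S⁰ ∈ ℝ^N satisfy 0 < S⁰_i < 1 for all i; set β = Σ_i S⁰_i. Let Φ : [0,1] → ℝ be Φ(x) = x·ln x for x > 0 and Φ(0) = 0. Define J(S) = (1/2)·(S − S⁰)ᵀ Q (S − S⁰) + Σ_i [ σ_w·(Φ(S_i) − S_i) + σ_n·(Φ(1 − S_i) − (1 − S_i)) + σ_wn·c_i·S_i ] on the compact convex set K = { S ∈ ℝ^N : 0 ≤ S_i ≤ 1 for all i, and Σ_i S_i = β }. Then J attains its minimum over K at a unique point S*, and this minimizer satisfies 0 < S*_i < 1 for every i. -/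

import Mathlib

open Real Finset

private lemma phiAdd {t ε : ℝ} (ht : 0 ≤ t) (hε : 0 < ε) (h1 : t + ε ≤ 1) :
    (t + ε) * Real.log (t + ε) - t * Real.log t ≤ ε := by
  rcases eq_or_lt_of_le ht with h0 | h0
  · rw [← h0]
    simp only [zero_add, Real.log_zero, mul_zero, sub_zero]
    have hl : Real.log ε ≤ 0 := Real.log_nonpos hε.le (by linarith)
    nlinarith
  · have hlt : Real.log (t + ε) - Real.log t ≤ ε / t := by
      rw [← Real.log_div (by positivity) (ne_of_gt h0)]
      have := Real.log_le_sub_one_of_pos (show 0 < (t+ε)/t by positivity)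
      calc Real.log ((t+ε)/t) ≤ (t+ε)/t - 1 := this
        _ = ε / t := by field_simp; ring
    have hl2 : Real.log (t + ε) ≤ 0 := Real.log_nonpos (by positivity) h1
    have key : t * (Real.log (t+ε) - Real.log t) ≤ ε := by
      calc t * (Real.log (t+ε) - Real.log t) ≤ t * (ε / t) := by nlinarith
        _ = ε := by field_simp
    nlinarith

private lemma phiSub {t ε : ℝ} (ht : 0 < t) (hε : 0 < ε) (hεt : ε ≤ t) :
    (t - ε) * Real.log (t - ε) - t * Real.log t ≤ ε * (-Real.log t) := by
  rcases eq_or_lt_of_le hεt with h0 | h0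
  · rw [h0]; simp
  · have hl : Real.log (t - ε) ≤ Real.log t := Real.log_le_log (by linarith) (by linarith)
    have h1 : (t - ε) * (Real.log (t - ε) - Real.log t) ≤ 0 :=
      mul_nonpos_of_nonneg_of_nonpos (by linarith) (by linarith)
    nlinarith

private lemma phiMidLe {x y : ℝ} (hx : 0 ≤ x) (hy : 0 ≤ y) :
    ((x + y) / 2) * Real.log ((x + y) / 2) ≤
      (x * Real.log x + y * Real.log y) / 2 := by
  have := Real.convexOn_mul_log.2 (Set.mem_Ici.2 hx) (Set.mem_Ici.2 hy)
    (by norm_num : (0:ℝ) ≤ 1/2) (by norm_num : (0:ℝ) ≤ 1/2) (by norm_num)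
  simp only [smul_eq_mul] at this
  calc ((x + y) / 2) * Real.log ((x + y) / 2)
      = (1/2*x + 1/2*y) * Real.log (1/2*x + 1/2*y) := by ring_nf
    _ ≤ 1/2 * (x * Real.log x) + 1/2 * (y * Real.log y) := this
    _ = (x * Real.log x + y * Real.log y) / 2 := by ring

private lemma phiMidLt {x y : ℝ} (hx : 0 ≤ x) (hy : 0 ≤ y) (hne : x ≠ y) :
    ((x + y) / 2) * Real.log ((x + y) / 2) <
      (x * Real.log x + y * Real.log y) / 2 := by
  have := Real.strictConvexOn_mul_log.2 (Set.mem_Ici.2 hx) (Set.mem_Ici.2 hy) hne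
    (by norm_num : (0:ℝ) < 1/2) (by norm_num : (0:ℝ) < 1/2) (by norm_num)
  simp only [smul_eq_mul] at this
  calc ((x + y) / 2) * Real.log ((x + y) / 2)
      = (1/2*x + 1/2*y) * Real.log (1/2*x + 1/2*y) := by ring_nf
    _ < 1/2 * (x * Real.log x) + 1/2 * (y * Real.log y) := this
    _ = (x * Real.log x + y * Real.log y) / 2 := by ring

private noncomputable def entT (σw σn bb x : ℝ) : ℝ :=
  σw * (x * Real.log x - x) + σn * ((1 - x) * Real.log (1 - x) - (1 - x)) + bb * x

private noncomputable def Jaux (N : ℕ) (σw σn : ℝ) (b : Fin N → ℝ) (Q : Matrix (Fin N) (Fin N) ℝ)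
    (S0 : Fin N → ℝ) : (Fin N → ℝ) → ℝ := fun S =>
  (1 / 2) * dotProduct (S - S0) (Q.mulVec (S - S0)) + ∑ i, entT σw σn (b i) (S i)

set_option maxHeartbeats 1600000 in
private lemma aux_pos (N : ℕ) (σw σn : ℝ) (hσw : 0 < σw) (hσn : 0 ≤ σn)
    (b : Fin N → ℝ) (Q : Matrix (Fin N) (Fin N) ℝ) (S0 Sstar : Fin N → ℝ)
    (hmem : ∀ k, Sstar k ∈ Set.Icc (0:ℝ) 1)
    (hsumpos : 0 < ∑ k, Sstar k)
    (hmin : ∀ S : Fin N → ℝ, (∀ k, S k ∈ Set.Icc (0:ℝ) 1) → (∑ k, S k = ∑ k, Sstar k) →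
      Jaux N σw σn b Q S0 Sstar ≤ Jaux N σw σn b Q S0 S)
    (i : Fin N) : 0 < Sstar i := by
  by_contra hcon
  push_neg at hcon
  have hi0 : Sstar i = 0 := le_antisymm hcon (hmem i).1
  have hex : ∃ j, 0 < Sstar j := by
    by_contra hall
    push_neg at hall
    have : ∑ k, Sstar k ≤ 0 := Finset.sum_nonpos fun k _ => hall k
    linarith
  obtain ⟨j, htpos⟩ := hex
  have hij : i ≠ j := fun h => by rw [h] at hi0; linarith [htpos, hi0]
  obtain ⟨t, htdef⟩ : ∃ t : ℝ, t = Sstar j := ⟨_, rfl⟩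
  rw [← htdef] at htpos
  have ht1 : t ≤ 1 := htdef ▸ (hmem j).2
  obtain ⟨v, hvdef⟩ : ∃ v : Fin N → ℝ,
      v = fun k => if k = i then 1 else if k = j then -1 else 0 := ⟨_, rfl⟩
  obtain ⟨d, hddef⟩ : ∃ d : Fin N → ℝ, d = Sstar - S0 := ⟨_, rfl⟩
  obtain ⟨X, hX⟩ : ∃ X : ℝ, X = dotProduct d (Q.mulVec v) := ⟨_, rfl⟩
  obtain ⟨Y, hY⟩ : ∃ Y : ℝ, Y = dotProduct v (Q.mulVec d) := ⟨_, rfl⟩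
  obtain ⟨Z, hZ⟩ : ∃ Z : ℝ, Z = dotProduct v (Q.mulVec v) := ⟨_, rfl⟩
  obtain ⟨A, hAdef⟩ : ∃ A : ℝ, A = |X| + |Y| + |Z| +
      σn + |b i| + σw * (1 - Real.log t) + |b j| := ⟨_, rfl⟩
  obtain ⟨ε, hεdef⟩ : ∃ ε : ℝ, ε = min t (Real.exp (-A / σw)) / 2 := ⟨_, rfl⟩
  have hmin0 : 0 < min t (Real.exp (-A / σw)) := lt_min htpos (Real.exp_pos _)
  have hε0 : 0 < ε := by rw [hεdef]; linarith
  have hεt : ε < t := by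
    have h1 : min t (Real.exp (-A / σw)) ≤ t := min_le_left _ _
    rw [hεdef]; linarith
  have hε1 : ε ≤ 1 := by linarith
  have hεe : ε < Real.exp (-A / σw) := by
    have h1 : min t (Real.exp (-A / σw)) ≤ Real.exp (-A / σw) := min_le_right _ _
    rw [hεdef]; linarith
  have hlog : Real.log ε < -A / σw := by
    have := Real.log_lt_log hε0 hεe
    rwa [Real.log_exp] at this
  have hkey : σw * (ε * Real.log ε) + A * ε < 0 := by
    have h1 : σw * Real.log ε < -A := by
      have h := (lt_div_iff₀ hσw).mp hlog
      nlinarith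
    nlinarith
  obtain ⟨Sε, hSεdef⟩ : ∃ Sε : Fin N → ℝ, Sε = Sstar + ε • v := ⟨_, rfl⟩
  have hSεi : Sε i = ε := by simp [hSεdef, hvdef, hi0]
  have hSεj : Sε j = t - ε := by
    simp [hSεdef, hvdef, hij.symm, ← htdef]; ring
  have hSεk : ∀ k, k ≠ i → k ≠ j → Sε k = Sstar k := by
    intro k hki hkj; simp [hSεdef, hvdef, hki, hkj]
  have hSεmem : ∀ k, Sε k ∈ Set.Icc (0:ℝ) 1 := by
    intro k
    rcases eq_or_ne k i with rfl | hki
    · rw [hSεi]; exact ⟨hε0.le, hε1⟩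
    rcases eq_or_ne k j with rfl | hkj
    · rw [hSεj]; constructor <;> [linarith; linarith]
    · rw [hSεk k hki hkj]; exact hmem k
  have hvsum : ∑ k, v k = 0 := by
    have h1 : ∑ k, v k = ∑ k ∈ ({i, j} : Finset (Fin N)), v k := by
      refine (Finset.sum_subset (Finset.subset_univ _) ?_).symm
      intro k _ hk
      simp only [Finset.mem_insert, Finset.mem_singleton, not_or] at hk
      simp [hvdef, hk.1, hk.2]
    rw [h1, Finset.sum_pair hij]
    simp [hvdef, hij.symm]
  have hSεsum : ∑ k, Sε k = ∑ k, Sstar k := by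
    simp only [hSεdef, Pi.add_apply, Pi.smul_apply, smul_eq_mul]
    rw [Finset.sum_add_distrib, ← Finset.mul_sum, hvsum]
    ring
  have hquadexp : dotProduct (Sε - S0) (Q.mulVec (Sε - S0)) =
      dotProduct d (Q.mulVec d) + ε * X + ε * Y + ε^2 * Z := by
    have hd : Sε - S0 = d + ε • v := by
      funext k; simp [hSεdef, hddef]; ring
    rw [hd, hX, hY, hZ]
    simp only [Matrix.mulVec_add, Matrix.mulVec_smul, add_dotProduct,
      smul_dotProduct, dotProduct_add, dotProduct_smul, smul_eq_mul]
    ring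
  have hquad : (1/2) * dotProduct (Sε - S0) (Q.mulVec (Sε - S0)) -
      (1/2) * dotProduct d (Q.mulVec d) ≤ (|X| + |Y| + |Z|) * ε := by
    rw [hquadexp]
    have l1 := le_abs_self X
    have l2 := le_abs_self Y
    have l3 := le_abs_self Z
    have l4 := abs_nonneg Z
    have e1 : ε * X ≤ ε * |X| := mul_le_mul_of_nonneg_left l1 hε0.le
    have e2 : ε * Y ≤ ε * |Y| := mul_le_mul_of_nonneg_left l2 hε0.le
    have e3a : ε^2 ≤ ε := by nlinarith
    have e3 : ε^2 * Z ≤ ε * |Z| :=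
      calc ε^2 * Z ≤ ε^2 * |Z| := mul_le_mul_of_nonneg_left l3 (sq_nonneg ε)
        _ ≤ ε * |Z| := mul_le_mul_of_nonneg_right e3a l4
    nlinarith [e1, e2, e3, mul_nonneg hε0.le (abs_nonneg X),
      mul_nonneg hε0.le (abs_nonneg Y), mul_nonneg hε0.le (abs_nonneg Z)]
  have hsumdiff : ∑ k, entT σw σn (b k) (Sε k) - ∑ k, entT σw σn (b k) (Sstar k) =
      (entT σw σn (b i) ε - entT σw σn (b i) 0) +
      (entT σw σn (b j) (t - ε) - entT σw σn (b j) t) := by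
    rw [← Finset.sum_sub_distrib]
    have h1 : ∑ k, (entT σw σn (b k) (Sε k) - entT σw σn (b k) (Sstar k)) =
        ∑ k ∈ ({i, j} : Finset (Fin N)), (entT σw σn (b k) (Sε k) - entT σw σn (b k) (Sstar k)) := by
      refine (Finset.sum_subset (Finset.subset_univ _) ?_).symm
      intro k _ hk
      simp only [Finset.mem_insert, Finset.mem_singleton, not_or] at hk
      rw [hSεk k hk.1 hk.2]; ring
    rw [h1, Finset.sum_pair hij, hSεi, hSεj, hi0, ← htdef]
  have hGi : entT σw σn (b i) ε - entT σw σn (b i) 0 ≤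
      σw * (ε * Real.log ε) + (σn + |b i|) * ε := by
    simp only [entT]
    have h1 : (1 - ε) * Real.log (1 - ε) ≤ 0 :=
      mul_nonpos_of_nonneg_of_nonpos (by linarith) (Real.log_nonpos (by linarith) (by linarith))
    have h2 : b i * ε ≤ |b i| * ε := by
      have := le_abs_self (b i); nlinarith
    simp only [Real.log_zero, Real.log_one, mul_zero, zero_mul, sub_zero, sub_self, mul_one]
    nlinarith
  have hGj : entT σw σn (b j) (t - ε) - entT σw σn (b j) t ≤
      (σw * (1 - Real.log t) + |b j|) * ε := by
    simp only [entT]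
    have h1 := phiSub htpos hε0 hεt.le
    have h2 : (1 - t + ε) * Real.log (1 - t + ε) - (1 - t) * Real.log (1 - t) ≤ ε := by
      have := phiAdd (t := 1 - t) (ε := ε) (by linarith) hε0 (by linarith)
      linarith [this]
    have h3 : -(b j * ε) ≤ |b j| * ε := by
      have := neg_abs_le (b j); nlinarith
    have h5 : 1 - (t - ε) = 1 - t + ε := by ring
    rw [h5]
    nlinarith
  have hmin2 := hmin Sε hSεmem hSεsum
  have hJdiff : Jaux N σw σn b Q S0 Sε - Jaux N σw σn b Q S0 Sstar ≤
      σw * (ε * Real.log ε) + A * ε := by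
    simp only [Jaux]
    rw [← hddef, hAdef]
    linarith [hquad, hsumdiff, hGi, hGj]
  linarith [hkey, hmin2, hJdiff]

private lemma entMidLe {σw σn : ℝ} (hσw : 0 ≤ σw) (hσn : 0 ≤ σn) (bb : ℝ) {x y : ℝ}
    (hx : x ∈ Set.Icc (0:ℝ) 1) (hy : y ∈ Set.Icc (0:ℝ) 1) :
    entT σw σn bb ((x + y)/2) ≤ (entT σw σn bb x + entT σw σn bb y) / 2 := by
  simp only [entT]
  have p1 := phiMidLe hx.1 hy.1
  have p2 : (1 - (x + y)/2) * Real.log (1 - (x + y)/2) ≤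
      ((1 - x) * Real.log (1 - x) + (1 - y) * Real.log (1 - y)) / 2 := by
    have e : 1 - (x + y)/2 = ((1 - x) + (1 - y))/2 := by ring
    rw [e]
    exact phiMidLe (by linarith [hx.2]) (by linarith [hy.2])
  have q1 := mul_le_mul_of_nonneg_left p1 hσw
  have q2 := mul_le_mul_of_nonneg_left p2 hσn
  nlinarith [q1, q2]

private lemma entMidLt {σw σn : ℝ} (hσw : 0 < σw) (hσn : 0 ≤ σn) (bb : ℝ) {x y : ℝ}
    (hx : x ∈ Set.Icc (0:ℝ) 1) (hy : y ∈ Set.Icc (0:ℝ) 1) (hne : x ≠ y) :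
    entT σw σn bb ((x + y)/2) < (entT σw σn bb x + entT σw σn bb y) / 2 := by
  simp only [entT]
  have p1 := phiMidLt hx.1 hy.1 hne
  have p2 : (1 - (x + y)/2) * Real.log (1 - (x + y)/2) ≤
      ((1 - x) * Real.log (1 - x) + (1 - y) * Real.log (1 - y)) / 2 := by
    have e : 1 - (x + y)/2 = ((1 - x) + (1 - y))/2 := by ring
    rw [e]
    exact phiMidLe (by linarith [hx.2]) (by linarith [hy.2])
  have q1 := mul_lt_mul_of_pos_left p1 hσw
  have q2 := mul_le_mul_of_nonneg_left p2 hσn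
  nlinarith [q1, q2]

private lemma Jaux_cont (N : ℕ) (σw σn : ℝ) (b : Fin N → ℝ) (Q : Matrix (Fin N) (Fin N) ℝ)
    (S0 : Fin N → ℝ) : Continuous (Jaux N σw σn b Q S0) := by
  unfold Jaux
  apply Continuous.add
  · apply Continuous.mul continuous_const
    simp only [dotProduct, Matrix.mulVec, Pi.sub_apply]
    apply continuous_finset_sum
    intro i _
    exact ((continuous_apply i).sub continuous_const).mul
      (continuous_finset_sum _ fun j _ => continuous_const.mul
        ((continuous_apply j).sub continuous_const))
  · apply continuous_finset_sum
    intro i _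
    unfold entT
    have hΦ : Continuous fun S : Fin N → ℝ => S i * Real.log (S i) :=
      Real.continuous_mul_log.comp (continuous_apply i)
    have hΦ2 : Continuous fun S : Fin N → ℝ => (1 - S i) * Real.log (1 - S i) :=
      Real.continuous_mul_log.comp (continuous_const.sub (continuous_apply i))
    fun_prop

private lemma Kcompact (N : ℕ) (β : ℝ) :
    IsCompact {S : Fin N → ℝ | (∀ i, S i ∈ Set.Icc (0:ℝ) 1) ∧ ∑ i, S i = β} := by
  have hpi : IsCompact (Set.pi Set.univ fun _ : Fin N => Set.Icc (0:ℝ) 1) :=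
    isCompact_univ_pi fun _ => isCompact_Icc
  have h1 : IsClosed {S : Fin N → ℝ | ∀ i, S i ∈ Set.Icc (0:ℝ) 1} := by
    have e : {S : Fin N → ℝ | ∀ i, S i ∈ Set.Icc (0:ℝ) 1} =
        ⋂ i, (fun S : Fin N → ℝ => S i) ⁻¹' Set.Icc (0:ℝ) 1 := by
      ext S; simp
    rw [e]
    exact isClosed_iInter fun i => isClosed_Icc.preimage (continuous_apply i)
  have h2 : IsClosed {S : Fin N → ℝ | ∑ i, S i = β} :=
    isClosed_eq (continuous_finset_sum _ fun i _ => continuous_apply i) continuous_const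
  apply hpi.of_isClosed_subset (h1.inter h2)
  intro S hS
  exact fun i _ => hS.1 i

set_option maxHeartbeats 1600000 in
/-- Unique solvability and bound preservation for the first-order convex-splitting scheme
(finite-dimensional core): the discrete energy functional `J` attains its minimum over the
constrained set `K` at a unique point, and this minimizer has all components in `(0,1)`. -/
theorem stmt11 (N : ℕ) (hN : 1 ≤ N) (σw σn σwn : ℝ)
    (hσw : 0 < σw) (hσn : 0 < σn) (hσwn : 0 < σwn)
    (c : Fin N → ℝ) (Q : Matrix (Fin N) (Fin N) ℝ) (hQ : Q.PosSemidef)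
    (S0 : Fin N → ℝ) (hS0 : ∀ i, S0 i ∈ Set.Ioo (0 : ℝ) 1) :
    let β : ℝ := ∑ i, S0 i
    let Φ : ℝ → ℝ := fun x => x * Real.log x
    let J : (Fin N → ℝ) → ℝ := fun S =>
      (1 / 2) * dotProduct (S - S0) (Q.mulVec (S - S0)) +
      ∑ i, (σw * (Φ (S i) - S i) + σn * (Φ (1 - S i) - (1 - S i)) + σwn * c i * S i)
    let K : Set (Fin N → ℝ) :=
      {S | (∀ i, S i ∈ Set.Icc (0 : ℝ) 1) ∧ ∑ i, S i = β}
    ∃ Sstar ∈ K, (∀ i, Sstar i ∈ Set.Ioo (0 : ℝ) 1) ∧ IsMinOn J K Sstar ∧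
      ∀ S ∈ K, IsMinOn J K S → S = Sstar := by
  intro β Φ J K
  have hNE : Nonempty (Fin N) := ⟨⟨0, hN⟩⟩
  have hJeq : ∀ S, J S = Jaux N σw σn (fun k => σwn * c k) Q S0 S := fun S => rfl
  have hβ : β = ∑ i, S0 i := rfl
  have hβpos : 0 < β := by
    rw [hβ]; exact Finset.sum_pos (fun k _ => (hS0 k).1) Finset.univ_nonempty
  have hβN : β < ∑ _k : Fin N, (1:ℝ) := by
    rw [hβ]; exact Finset.sum_lt_sum_of_nonempty Finset.univ_nonempty fun k _ => (hS0 k).2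
  have hS0K : S0 ∈ K := ⟨fun i => ⟨(hS0 i).1.le, (hS0 i).2.le⟩, rfl⟩
  have hKcomp : IsCompact K := Kcompact N β
  have hJcont : Continuous J := by
    have e : J = Jaux N σw σn (fun k => σwn * c k) Q S0 := funext hJeq
    rw [e]; exact Jaux_cont N σw σn _ Q S0
  obtain ⟨Sstar, hSK, hminstar⟩ := hKcomp.exists_isMinOn ⟨S0, hS0K⟩ hJcont.continuousOn
  -- every minimizer is interior
  have hint : ∀ T, T ∈ K → IsMinOn J K T → ∀ i, T i ∈ Set.Ioo (0:ℝ) 1 := by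
    intro T hT hminT i
    have hTsum : ∑ k, T k = β := hT.2
    have hminT' := isMinOn_iff.mp hminT
    constructor
    · refine aux_pos N σw σn hσw hσn.le (fun k => σwn * c k) Q S0 T hT.1 ?_ ?_ i
      · rw [hTsum]; exact hβpos
      · intro S hS1 hS2
        have hSK' : S ∈ K := ⟨hS1, by rw [hS2, hTsum]⟩
        have h := hminT' S hSK'
        rw [hJeq S, hJeq T] at h
        exact h
    · have key : ∀ U : Fin N → ℝ,
          Jaux N σn σw (fun k => -(σwn * c k)) Q (fun k => 1 - S0 k) U
            = Jaux N σw σn (fun k => σwn * c k) Q S0 (fun k => 1 - U k) - ∑ k, σwn * c k := by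
        intro U
        simp only [Jaux, entT]
        have hq : (fun k => 1 - U k) - S0 = -(U - fun k => 1 - S0 k) := by
          funext k; simp only [Pi.sub_apply, Pi.neg_apply]; ring
        rw [hq, Matrix.mulVec_neg, neg_dotProduct, dotProduct_neg, neg_neg]
        rw [add_sub_assoc, ← Finset.sum_sub_distrib]
        congr 1
        apply Finset.sum_congr rfl
        intro k _
        have h1 : (1 : ℝ) - (1 - U k) = U k := by ring
        rw [h1]
        ring
      have hTT : (fun k => 1 - (1 - T k)) = T := by funext k; ring
      have h := aux_pos N σn σw hσn hσw.le (fun k => -(σwn * c k)) Q (fun k => 1 - S0 k)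
        (fun k => 1 - T k) (fun k => ⟨by show (0:ℝ) ≤ 1 - T k; linarith [(hT.1 k).2],
          by show (1:ℝ) - T k ≤ 1; linarith [(hT.1 k).1]⟩)
        (by
          have e : ∑ k, (1 - T k) = ∑ _k : Fin N, (1:ℝ) - β := by
            rw [Finset.sum_sub_distrib, hTsum]
          rw [e]; linarith)
        (by
          intro S hS1 hS2
          have hS1' : ∀ k, (1 - S k) ∈ Set.Icc (0:ℝ) 1 :=
            fun k => ⟨by linarith [(hS1 k).2], by linarith [(hS1 k).1]⟩
          have hsum' : ∑ k, (1 - S k) = β := by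
            have e1 : ∑ k, ((1:ℝ) - S k) = ∑ _k : Fin N, (1:ℝ) - ∑ k, S k :=
              Finset.sum_sub_distrib _ _
            have e2 : ∑ k, ((1:ℝ) - T k) = ∑ _k : Fin N, (1:ℝ) - β := by
              rw [Finset.sum_sub_distrib, hTsum]
            rw [e1, hS2, e2]; ring
          have hSK' : (fun k => 1 - S k) ∈ K := ⟨hS1', hsum'⟩
          rw [key, key, hTT]
          have h := hminT' (fun k => 1 - S k) hSK'
          rw [hJeq, hJeq] at h
          linarith)
        i
      have h' : 0 < 1 - T i := h
      linarith
  refine ⟨Sstar, hSK, hint Sstar hSK hminstar, hminstar, ?_⟩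
  intro S hS hminS
  by_contra hne
  obtain ⟨i0, hi0⟩ : ∃ i0, S i0 ≠ Sstar i0 := by
    by_contra hall; push_neg at hall; exact hne (funext hall)
  obtain ⟨M, hMdef⟩ : ∃ M : Fin N → ℝ, M = fun k => (S k + Sstar k)/2 := ⟨_, rfl⟩
  have hMk : ∀ k, M k = (S k + Sstar k)/2 := fun k => by rw [hMdef]
  have hMK : M ∈ K := by
    constructor
    · intro k
      have h1 := (hS.1 k).1; have h2 := (hS.1 k).2
      have h3 := (hSK.1 k).1; have h4 := (hSK.1 k).2
      rw [hMk k]; exact ⟨by linarith, by linarith⟩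
    · have e1 : ∑ k, M k = ∑ k, (S k + Sstar k)/2 :=
        Finset.sum_congr rfl fun k _ => hMk k
      rw [e1, ← Finset.sum_div, Finset.sum_add_distrib, hS.2, hSK.2]
      ring
  have hJSeq : J S = J Sstar :=
    le_antisymm (isMinOn_iff.mp hminS Sstar hSK) (isMinOn_iff.mp hminstar S hS)
  -- quadratic midpoint inequality
  obtain ⟨d1, hd1⟩ : ∃ d : Fin N → ℝ, d = S - S0 := ⟨_, rfl⟩
  obtain ⟨d2, hd2⟩ : ∃ d : Fin N → ℝ, d = Sstar - S0 := ⟨_, rfl⟩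
  obtain ⟨a1, ha1⟩ : ∃ a : ℝ, a = dotProduct d1 (Q.mulVec d1) := ⟨_, rfl⟩
  obtain ⟨a2, ha2⟩ : ∃ a : ℝ, a = dotProduct d2 (Q.mulVec d2) := ⟨_, rfl⟩
  obtain ⟨a12, ha12⟩ : ∃ a : ℝ, a = dotProduct d1 (Q.mulVec d2) := ⟨_, rfl⟩
  obtain ⟨a21, ha21⟩ : ∃ a : ℝ, a = dotProduct d2 (Q.mulVec d1) := ⟨_, rfl⟩
  have hpsd : 0 ≤ a1 - a12 - a21 + a2 := by
    have h := hQ.dotProduct_mulVec_nonneg (d1 - d2)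
    rw [star_trivial] at h
    rw [Matrix.mulVec_sub, sub_dotProduct, dotProduct_sub,
      dotProduct_sub] at h
    rw [ha1, ha2, ha12, ha21]
    linarith
  have hmidvec : M - S0 = (1/2 : ℝ) • (d1 + d2) := by
    funext k
    simp only [hd1, hd2, Pi.sub_apply, Pi.add_apply, Pi.smul_apply, smul_eq_mul, hMk k]
    ring
  have hmidq : dotProduct (M - S0) (Q.mulVec (M - S0)) =
      (1/4) * (a1 + a12 + a21 + a2) := by
    rw [hmidvec, ha1, ha2, ha12, ha21]
    simp only [Matrix.mulVec_add, Matrix.mulVec_smul, add_dotProduct,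
      smul_dotProduct, dotProduct_add, dotProduct_smul, smul_eq_mul]
    ring
  -- entropy strict inequality
  have hsumlt : ∑ k, entT σw σn (σwn * c k) (M k) <
      (∑ k, entT σw σn (σwn * c k) (S k) + ∑ k, entT σw σn (σwn * c k) (Sstar k))/2 := by
    have hlt : ∑ k, entT σw σn (σwn * c k) (M k) <
        ∑ k, (entT σw σn (σwn * c k) (S k) + entT σw σn (σwn * c k) (Sstar k))/2 := by
      refine Finset.sum_lt_sum (fun k _ => ?_) ⟨i0, Finset.mem_univ _, ?_⟩
      · rw [hMk k]; exact entMidLe hσw.le hσn.le _ (hS.1 k) (hSK.1 k)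
      · rw [hMk i0]; exact entMidLt hσw hσn.le _ (hS.1 i0) (hSK.1 i0) hi0
    have e : ∑ k, (entT σw σn (σwn * c k) (S k) + entT σw σn (σwn * c k) (Sstar k))/2 =
        (∑ k, entT σw σn (σwn * c k) (S k) + ∑ k, entT σw σn (σwn * c k) (Sstar k))/2 := by
      rw [← Finset.sum_div, Finset.sum_add_distrib]
    linarith [hlt, e.le, e.ge]
  have hJM : J M = (1/2) * dotProduct (M - S0) (Q.mulVec (M - S0)) +
      ∑ k, entT σw σn (σwn * c k) (M k) := hJeq M
  have hJS' : J S = (1/2) * a1 + ∑ k, entT σw σn (σwn * c k) (S k) := by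
    rw [hJeq S, ha1, hd1]; rfl
  have hJSt : J Sstar = (1/2) * a2 + ∑ k, entT σw σn (σwn * c k) (Sstar k) := by
    rw [hJeq Sstar, ha2, hd2]; rfl
  have hms : J Sstar ≤ J M := isMinOn_iff.mp hminstar M hMK
  rw [hJM, hmidq] at hms
  rw [hJS'] at hJSeq
  rw [hJSt] at hJSeq
  linarith [hpsd, hsumlt, hms, hJSeq]
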